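/- Let h : ℝⁿ → ℝ be convex, Φ : ℝᵐ → ℝⁿ differentiable at x̄, and suppose ∂(h∘Φ)(x̄) = ∇Φ(x̄)ᵀ ∂h(Φ(x̄)) (subdifferential chain rule holds). If ḡ ∈ ri ∂h(Φ(x̄)), then ∇Φ(x̄)ᵀ ḡ ∈ ri ∂(h∘Φ)(x̄), and consequently the U-space of f = h∘Φ at x̄ is U = {d ∈ ℝᵐ : dᵀ∇Φ(x̄)ᵀ g = dᵀ∇Φ(x̄)ᵀ ḡ for all g ∈ ∂h(Φ(x̄))}. -/

import Mathlib

open Set Filter Topology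
open scoped RealInnerProductSpace

variable {V : Type*} [NormedAddCommGroup V] [NormedSpace ℝ V]

lemma mem_intrinsicInterior_iff_nhdsWithin {s : Set V} {x : V} :
    x ∈ intrinsicInterior ℝ s ↔
      x ∈ affineSpan ℝ s ∧ s ∈ 𝓝[(affineSpan ℝ s : Set V)] x := by
  constructor
  · rintro ⟨y, hy, rfl⟩
    refine ⟨y.2, ?_⟩
    obtain ⟨t, hts, htO, hyt⟩ := mem_interior.1 hy
    obtain ⟨O, hO, rfl⟩ := isOpen_induced_iff.1 htO
    refine mem_nhdsWithin.2 ⟨O, hO, hyt, ?_⟩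
    rintro v ⟨hvO, hvA⟩
    exact hts (show (⟨v, hvA⟩ : affineSpan ℝ s) ∈ _ from hvO)
  · rintro ⟨hxA, hs⟩
    obtain ⟨O, hO, hxO, hOs⟩ := mem_nhdsWithin.1 hs
    refine ⟨⟨x, hxA⟩, mem_interior.2
      ⟨(↑) ⁻¹' O, ?_, hO.preimage continuous_subtype_val, Set.mem_preimage.2 hxO⟩, rfl⟩
    rintro ⟨v, hvA⟩ hvO
    exact hOs ⟨hvO, hvA⟩

lemma extension_of_mem_intrinsicInterior {s : Set V} {x y : V}
    (hx : x ∈ intrinsicInterior ℝ s) (hy : y ∈ s) :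
    ∃ ε > (0:ℝ), x + ε • (x - y) ∈ s := by
  obtain ⟨hxA, hs⟩ := mem_intrinsicInterior_iff_nhdsWithin.1 hx
  have hyA : y ∈ affineSpan ℝ s := subset_affineSpan ℝ s hy
  have hc : Tendsto (fun ε : ℝ => x + ε • (x - y)) (𝓝[>] 0)
      (𝓝[(affineSpan ℝ s : Set V)] x) := by
    rw [tendsto_nhdsWithin_iff]
    constructor
    · have : Continuous (fun ε : ℝ => x + ε • (x - y)) := by continuity
      simpa using (this.tendsto 0).mono_left nhdsWithin_le_nhds
    · refine Eventually.of_forall fun ε => ?_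
      have := AffineSubspace.smul_vsub_vadd_mem (affineSpan ℝ s) (1 + ε) hxA hyA hyA
      simp only [SetLike.mem_coe]
      convert this using 1
      show x + ε • (x - y) = (1 + ε) • (x - y) + y
      module
  have h1 := hc.eventually_mem hs
  obtain ⟨ε, hε1, hε2⟩ := (h1.and eventually_mem_nhdsWithin).exists
  exact ⟨ε, hε2, hε1⟩

lemma mem_intrinsicInterior_of_extension {s : Set V} (hconv : Convex ℝ s) {x z : V}
    (hz : z ∈ intrinsicInterior ℝ s) {ε : ℝ} (hε : 0 < ε)
    (hx : x + ε • (x - z) ∈ s) (hxs : x ∈ s) : x ∈ intrinsicInterior ℝ s := by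
  obtain ⟨hzA, hs⟩ := mem_intrinsicInterior_iff_nhdsWithin.1 hz
  have hys : x + ε • (x - z) ∈ s := hx
  have hyA : x + ε • (x - z) ∈ affineSpan ℝ s := subset_affineSpan ℝ s hys
  have h1ε : (0:ℝ) < 1 + ε := by linarith
  have hc0 : (0:ℝ) < ε / (1 + ε) := div_pos hε h1ε
  have hb0 : (0:ℝ) < 1 / (1 + ε) := div_pos one_pos h1ε
  have hcb : ε / (1 + ε) + 1 / (1 + ε) = 1 := by field_simp; ring
  refine mem_intrinsicInterior_iff_nhdsWithin.2 ⟨subset_affineSpan ℝ s hxs, ?_⟩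
  obtain ⟨u, hu, hzu, hus⟩ := mem_nhdsWithin.1 hs
  let φ : V ≃ₜ V := (Homeomorph.smulOfNeZero (ε / (1 + ε)) hc0.ne').trans
    (Homeomorph.addRight ((1 / (1 + ε)) • (x + ε • (x - z))))
  have hφ : ∀ v, φ v = (ε / (1 + ε)) • v + (1 / (1 + ε)) • (x + ε • (x - z)) := fun v => rfl
  refine mem_nhdsWithin.2 ⟨φ '' u, φ.isOpenMap u hu, ?_, ?_⟩
  · refine ⟨z, hzu, ?_⟩
    rw [hφ]
    match_scalars <;> (field_simp; try ring)
  · rintro w ⟨⟨v, hvu, rfl⟩, hwA⟩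
    have hvA : v ∈ affineSpan ℝ s := by
      have := AffineSubspace.smul_vsub_vadd_mem (affineSpan ℝ s)
        ((1 + ε) / ε) hwA hyA hyA
      convert this using 1
      show v = ((1 + ε) / ε) • (φ v -ᵥ (x + ε • (x - z))) +ᵥ (x + ε • (x - z))
      rw [hφ, vsub_eq_sub, vadd_eq_add]
      match_scalars <;> (field_simp; try ring)
    have hvs : v ∈ s := hus ⟨hvu, hvA⟩
    rw [hφ]
    exact hconv hvs hys hc0.le hb0.le hcb

/-- The convex subdifferential. -/
def subdiff {n : ℕ} (f : EuclideanSpace ℝ (Fin n) → ℝ) (x : EuclideanSpace ℝ (Fin n)) :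
    Set (EuclideanSpace ℝ (Fin n)) :=
  {g | ∀ y, f x + ⟪g, y - x⟫ ≤ f y}

lemma subdiff_convex {n : ℕ} (f : EuclideanSpace ℝ (Fin n) → ℝ) (x : EuclideanSpace ℝ (Fin n)) :
    Convex ℝ (subdiff f x) := by
  intro g₁ hg₁ g₂ hg₂ a b ha hb hab
  intro y
  have h1 := hg₁ y
  have h2 := hg₂ y
  have : ⟪a • g₁ + b • g₂, y - x⟫ = a * ⟪g₁, y - x⟫ + b * ⟪g₂, y - x⟫ := by
    rw [inner_add_left, real_inner_smul_left, real_inner_smul_left]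
  rw [this]
  have hfx : a * f x + b * f x = f x := by rw [← add_mul, hab, one_mul]
  have hfy : a * f y + b * f y = f y := by rw [← add_mul, hab, one_mul]
  linarith [mul_le_mul_of_nonneg_left h1 ha, mul_le_mul_of_nonneg_left h2 hb]

theorem chain_rule_U_space (m n : ℕ)
    (h : EuclideanSpace ℝ (Fin n) → ℝ) (hconv : ConvexOn ℝ Set.univ h)
    (Φ : EuclideanSpace ℝ (Fin m) → EuclideanSpace ℝ (Fin n))
    (xbar : EuclideanSpace ℝ (Fin m)) (hΦ : DifferentiableAt ℝ Φ xbar)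
    (Sf : Set (EuclideanSpace ℝ (Fin m)))
    (hchain : Sf =
      (fun g => ContinuousLinearMap.adjoint (fderiv ℝ Φ xbar) g) '' subdiff h (Φ xbar))
    (gbar : EuclideanSpace ℝ (Fin n))
    (hg : gbar ∈ intrinsicInterior ℝ (subdiff h (Φ xbar))) :
    ContinuousLinearMap.adjoint (fderiv ℝ Φ xbar) gbar ∈ intrinsicInterior ℝ Sf ∧
    {d : EuclideanSpace ℝ (Fin m) | ∀ g ∈ subdiff h (Φ xbar),
        ⟪d, ContinuousLinearMap.adjoint (fderiv ℝ Φ xbar) g⟫ =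
          ⟪d, ContinuousLinearMap.adjoint (fderiv ℝ Φ xbar) gbar⟫} =
      {d : EuclideanSpace ℝ (Fin m) | ∀ s ∈ Sf,
        ⟪d, s⟫ = ⟪d, ContinuousLinearMap.adjoint (fderiv ℝ Φ xbar) gbar⟫} := by
  set A := ContinuousLinearMap.adjoint (fderiv ℝ Φ xbar) with hA
  set S := subdiff h (Φ xbar) with hS
  have hSconv : Convex ℝ S := subdiff_convex h (Φ xbar)
  have hSfconv : Convex ℝ Sf := by
    rw [hchain]
    exact hSconv.is_linear_image ⟨A.map_add, A.map_smul⟩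
  have hgS : gbar ∈ S := intrinsicInterior_subset hg
  have hAg : A gbar ∈ Sf := hchain ▸ ⟨gbar, hgS, rfl⟩
  constructor
  · obtain ⟨z, hzri⟩ := Set.Nonempty.intrinsicInterior hSfconv ⟨A gbar, hAg⟩
    obtain ⟨w, hwS, hwz⟩ := hchain ▸ intrinsicInterior_subset hzri
    obtain ⟨ε, hε, hext⟩ := extension_of_mem_intrinsicInterior hg hwS
    refine mem_intrinsicInterior_of_extension hSfconv hzri hε ?_ hAg
    have hwz' : A w = z := hwz
    have : A gbar + ε • (A gbar - z) = A (gbar + ε • (gbar - w)) := by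
      rw [map_add, map_smul, map_sub, ← hwz']
    rw [this, hchain]
    exact ⟨_, hext, rfl⟩
  · rw [hchain]
    ext d
    simp only [Set.mem_setOf_eq, Set.forall_mem_image]
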